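/- For each group g ∈ {X, Y}, let f₁^g, f₀^g be full-support probability densities on ℝ satisfying strict MLRP, and let H^g be a full-support cost CDF. Then there exist measurable classifiers δ^X, δ^Y : ℝ → [0,1] and stakes r^X, r^Y ∈ ℝ such that: (i) TPR(δ^X) = TPR(δ^Y) =: 𝒯 and FPR(δ^X) = FPR(δ^Y) =: ℱ, where group g's error rates are computed against f₁^g, f₀^g (error-rate balance), with 0 < ℱ < 𝒯 (informativeness); (ii) the equilibrium prevalences π^g = H^g(r^g·(𝒯 − ℱ)) satisfy π^X = π^Y, so that the positive predictive values π^g·𝒯/(π^g·𝒯 + (1−π^g)·ℱ) coincide across groups (predictive parity); and (iii) π^g ≥ H^g(0) for both groups (aligned incentives). -/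

import Mathlib

open MeasureTheory

/-- A full-support probability density on ℝ. -/
def IsFullSupportDensity (f : ℝ → ℝ) : Prop :=
  Measurable f ∧ (∀ s, 0 < f s) ∧ (∫ s, f s) = 1

/-- Strict monotone likelihood ratio property of `f₁` relative to `f₀`. -/
def StrictMLRP (f₁ f₀ : ℝ → ℝ) : Prop :=
  ∀ s t : ℝ, s < t → f₁ s * f₀ t < f₁ t * f₀ s

/-- A (randomized) classifier: a measurable map from signals to probabilities. -/
def IsClassifier (δ : ℝ → ℝ) : Prop :=
  Measurable δ ∧ ∀ s, δ s ∈ Set.Icc (0 : ℝ) 1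

/-- True positive rate of classifier `δ` against compliant density `f₁`. -/
noncomputable def TPR (δ f₁ : ℝ → ℝ) : ℝ := ∫ s, δ s * f₁ s

/-- False positive rate of classifier `δ` against non-compliant density `f₀`. -/
noncomputable def FPR (δ f₀ : ℝ → ℝ) : ℝ := ∫ s, δ s * f₀ s

/-- A full-support cost CDF. -/
def IsFullSupportCDF (H : ℝ → ℝ) : Prop :=
  Monotone H ∧ Continuous H ∧ (∀ c, 0 < H c ∧ H c < 1) ∧
    Filter.Tendsto H Filter.atBot (nhds 0) ∧ Filter.Tendsto H Filter.atTop (nhds 1)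

/-- Positive predictive value given prevalence `π` and error rates `𝒯`, `ℱ`. -/
noncomputable def PPV (π 𝒯 ℱ : ℝ) : ℝ := π * 𝒯 / (π * 𝒯 + (1 - π) * ℱ)

lemma fsd_integrable {f : ℝ → ℝ} (h : IsFullSupportDensity f) : Integrable f := by
  by_contra hc
  have h2 := h.2.2
  rw [integral_undef hc] at h2
  norm_num at h2

lemma group_lemma (f₁ f₀ : ℝ → ℝ) (h₁ : IsFullSupportDensity f₁)
    (h₀ : IsFullSupportDensity f₀) (hm : StrictMLRP f₁ f₀) :
    ∃ I₁ I₀ : ℝ, 0 ≤ I₀ ∧ I₀ ≤ 1 ∧ I₀ < I₁ ∧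
      ∀ a b : ℝ, 0 ≤ a → 0 ≤ b → a + b ≤ 1 →
        ∃ δ, IsClassifier δ ∧ TPR δ f₁ = a * I₁ + b ∧ FPR δ f₀ = a * I₀ + b := by
  classical
  set χ : ℝ → ℝ := fun s => if f₀ s < f₁ s then 1 else 0 with hχdef
  have hχmeas : Measurable χ :=
    Measurable.ite (measurableSet_lt h₀.1 h₁.1) measurable_const measurable_const
  have hχ0 : ∀ s, 0 ≤ χ s := by intro s; simp only [hχdef]; split <;> norm_num
  have hχ1 : ∀ s, χ s ≤ 1 := by intro s; simp only [hχdef]; split <;> norm_num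
  have hint : ∀ (f : ℝ → ℝ), IsFullSupportDensity f → Integrable (fun s => χ s * f s) := by
    intro f hf
    refine (fsd_integrable hf).mono ((hχmeas.mul hf.1).aestronglyMeasurable) ?_
    filter_upwards with s
    rw [Real.norm_eq_abs, Real.norm_eq_abs, abs_mul]
    calc |χ s| * |f s| ≤ 1 * |f s| := by
          apply mul_le_mul_of_nonneg_right _ (abs_nonneg _)
          rw [abs_of_nonneg (hχ0 s)]; exact hχ1 s
      _ = |f s| := one_mul _
  have hint1 := hint f₁ h₁
  have hint0 := hint f₀ h₀
  refine ⟨∫ s, χ s * f₁ s, ∫ s, χ s * f₀ s, ?_, ?_, ?_, ?_⟩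
  · exact integral_nonneg fun s => mul_nonneg (hχ0 s) (h₀.2.1 s).le
  · calc (∫ s, χ s * f₀ s) ≤ ∫ s, f₀ s := by
          apply integral_mono hint0 (fsd_integrable h₀)
          intro s
          exact mul_le_of_le_one_left (h₀.2.1 s).le (hχ1 s)
      _ = 1 := h₀.2.2
  · -- strict inequality: ∫ χ(f₁-f₀) > 0
    have hgeq : (fun s => χ s * f₁ s - χ s * f₀ s) =
        fun s => if f₀ s < f₁ s then f₁ s - f₀ s else 0 := by
      funext s
      simp only [hχdef]
      split <;> ring
    have hgnonneg : ∀ s, 0 ≤ χ s * f₁ s - χ s * f₀ s := by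
      intro s
      rw [congrFun hgeq s]
      split
      · linarith
      · exact le_refl 0
    have hgint : Integrable (fun s => χ s * f₁ s - χ s * f₀ s) := hint1.sub hint0
    have hpos : 0 < ∫ s, (χ s * f₁ s - χ s * f₀ s) := by
      rcases lt_or_eq_of_le (integral_nonneg (f := fun s => χ s * f₁ s - χ s * f₀ s) hgnonneg) with h | h
      · exact h
      · exfalso
        have hzero : (fun s => χ s * f₁ s - χ s * f₀ s) =ᵐ[volume] 0 := by
          rw [← integral_eq_zero_iff_of_nonneg hgnonneg hgint]
          exact h.symm
        -- g = 0 a.e. ⟹ f₁ ≤ f₀ a.e.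
        have hle : ∀ᵐ s, f₁ s ≤ f₀ s := by
          filter_upwards [hzero] with s hs
          by_contra hc
          push_neg at hc
          rw [congrFun hgeq s] at hs
          simp only [if_pos hc, Pi.zero_apply] at hs
          linarith
        have hsubint : Integrable (fun s => f₀ s - f₁ s) :=
          (fsd_integrable h₀).sub (fsd_integrable h₁)
        have hsubzero : (∫ s, (f₀ s - f₁ s)) = 0 := by
          rw [integral_sub (fsd_integrable h₀) (fsd_integrable h₁), h₀.2.2, h₁.2.2]
          ring
        have heq : (fun s => f₀ s - f₁ s) =ᵐ[volume] 0 := by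
          rw [← integral_eq_zero_iff_of_nonneg_ae (by
            filter_upwards [hle] with s hs
            simp only [Pi.zero_apply]
            linarith) hsubint]
          exact hsubzero
        -- find s < 0 < t with f₀ = f₁ at both
        set N := {s : ℝ | ¬ (f₀ s - f₁ s = 0)} with hN
        have hNnull : volume N = 0 := by
          have := heq
          rw [Filter.EventuallyEq, ae_iff] at this
          exact this
        have hlo : ¬ (Set.Iio (0:ℝ) ⊆ N) := by
          intro hsub
          have : volume (Set.Iio (0:ℝ)) = 0 := measure_mono_null hsub hNnull
          rw [Real.volume_Iio] at this
          exact (ENNReal.top_ne_zero) this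
        have hhi : ¬ (Set.Ioi (0:ℝ) ⊆ N) := by
          intro hsub
          have : volume (Set.Ioi (0:ℝ)) = 0 := measure_mono_null hsub hNnull
          rw [Real.volume_Ioi] at this
          exact (ENNReal.top_ne_zero) this
        rw [Set.not_subset] at hlo hhi
        obtain ⟨s, hs, hsN⟩ := hlo
        obtain ⟨t, ht, htN⟩ := hhi
        simp only [hN, Set.mem_setOf_eq, not_not] at hsN htN
        have hst : s < t := lt_trans hs ht
        have := hm s t hst
        have e1 : f₀ s = f₁ s := by linarith
        have e2 : f₀ t = f₁ t := by linarith
        rw [← e1, ← e2] at this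
        nlinarith
    rw [integral_sub hint1 hint0] at hpos
    linarith
  · intro a b ha hb hab
    refine ⟨fun s => a * χ s + b, ⟨(hχmeas.const_mul a).add measurable_const, ?_⟩, ?_, ?_⟩
    · intro s
      constructor
      · show 0 ≤ a * χ s + b
        nlinarith [hχ0 s]
      · show a * χ s + b ≤ 1
        nlinarith [hχ0 s, hχ1 s]
    · unfold TPR
      have : (fun s => (a * χ s + b) * f₁ s) =
          fun s => a * (χ s * f₁ s) + b * f₁ s := by funext s; ring
      rw [this, integral_add ((hint1).const_mul a) ((fsd_integrable h₁).const_mul b),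
        integral_const_mul, integral_const_mul, h₁.2.2, mul_one]
    · unfold FPR
      have : (fun s => (a * χ s + b) * f₀ s) =
          fun s => a * (χ s * f₀ s) + b * f₀ s := by funext s; ring
      rw [this, integral_add ((hint0).const_mul a) ((fsd_integrable h₀).const_mul b),
        integral_const_mul, integral_const_mul, h₀.2.2, mul_one]

lemma stake_lemma (H : ℝ → ℝ) (hH : IsFullSupportCDF H) (ε : ℝ) (hε : 0 < ε)
    (π : ℝ) (h1 : H 0 ≤ π) (h2 : π < 1) : ∃ r, H (r * ε) = π := by
  have htend : Filter.Tendsto (fun r : ℝ => H (r * ε)) Filter.atTop (nhds 1) :=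
    hH.2.2.2.2.comp (Filter.Tendsto.atTop_mul_const hε Filter.tendsto_id)
  have : ∀ᶠ r in Filter.atTop, π < H (r * ε) :=
    htend.eventually (eventually_gt_nhds h2)
  obtain ⟨R, hR⟩ := this.exists
  have hR0 : (0:ℝ) ≤ max R 0 := le_max_right _ _
  have hcont : ContinuousOn (fun r : ℝ => H (r * ε)) (Set.Icc 0 (max R 0)) :=
    (hH.2.1.comp (continuous_id.mul continuous_const)).continuousOn
  have hmem : π ∈ Set.Icc ((fun r : ℝ => H (r * ε)) 0) ((fun r : ℝ => H (r * ε)) (max R 0)) := by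
    constructor
    · simpa using h1
    · have : H (R * ε) ≤ H (max R 0 * ε) := hH.1 (by
        apply mul_le_mul_of_nonneg_right (le_max_left _ _) hε.le)
      exact le_trans hR.le this
  obtain ⟨r, _, hr⟩ := intermediate_value_Icc hR0 hcont hmem
  exact ⟨r, hr⟩

/-- **Theorem 1.** For any two groups there exist an informative classification rule
(pair of group-specific classifiers with common error rates `0 < ℱ < 𝒯`) and stakes
satisfying aligned incentives such that error-rate balance and predictive parity are
jointly satisfied in equilibrium. -/
theorem fairness_possibility
    (f₁X f₀X f₁Y f₀Y : ℝ → ℝ) (HX HY : ℝ → ℝ)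
    (h₁X : IsFullSupportDensity f₁X) (h₀X : IsFullSupportDensity f₀X)
    (h₁Y : IsFullSupportDensity f₁Y) (h₀Y : IsFullSupportDensity f₀Y)
    (hmX : StrictMLRP f₁X f₀X) (hmY : StrictMLRP f₁Y f₀Y)
    (hHX : IsFullSupportCDF HX) (hHY : IsFullSupportCDF HY) :
    ∃ (δX δY : ℝ → ℝ) (rX rY 𝒯 ℱ : ℝ),
      IsClassifier δX ∧ IsClassifier δY ∧
      -- error-rate balance with common rates 𝒯 and ℱ
      TPR δX f₁X = 𝒯 ∧ TPR δY f₁Y = 𝒯 ∧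
      FPR δX f₀X = ℱ ∧ FPR δY f₀Y = ℱ ∧
      -- informativeness
      0 < ℱ ∧ ℱ < 𝒯 ∧
      -- equal equilibrium prevalence, hence predictive parity
      HX (rX * (𝒯 - ℱ)) = HY (rY * (𝒯 - ℱ)) ∧
      PPV (HX (rX * (𝒯 - ℱ))) 𝒯 ℱ = PPV (HY (rY * (𝒯 - ℱ))) 𝒯 ℱ ∧
      -- aligned incentives
      HX (rX * (𝒯 - ℱ)) ≥ HX 0 ∧ HY (rY * (𝒯 - ℱ)) ≥ HY 0 := by
  obtain ⟨I₁X, I₀X, hI₀X0, hI₀X1, hDX, hconX⟩ := group_lemma f₁X f₀X h₁X h₀X hmX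
  obtain ⟨I₁Y, I₀Y, hI₀Y0, hI₀Y1, hDY, hconY⟩ := group_lemma f₁Y f₀Y h₁Y h₀Y hmY
  set DX := I₁X - I₀X with hDXdef
  set DY := I₁Y - I₀Y with hDYdef
  have hDXpos : 0 < DX := by simp [hDXdef]; linarith
  have hDYpos : 0 < DY := by simp [hDYdef]; linarith
  set ε := min DX DY / 2 with hεdef
  have hε : 0 < ε := by
    apply div_pos (lt_min hDXpos hDYpos) (by norm_num)
  -- coefficients for group X
  set aX := ε / DX with haXdef
  set aY := ε / DY with haYdef
  have haX0 : 0 ≤ aX := div_nonneg hε.le hDXpos.le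
  have haY0 : 0 ≤ aY := div_nonneg hε.le hDYpos.le
  have haXhalf : aX ≤ 1 / 2 := by
    rw [haXdef, div_le_iff₀ hDXpos]
    have : min DX DY ≤ DX := min_le_left _ _
    rw [hεdef]; linarith
  have haYhalf : aY ≤ 1 / 2 := by
    rw [haYdef, div_le_iff₀ hDYpos]
    have : min DX DY ≤ DY := min_le_right _ _
    rw [hεdef]; linarith
  set bX := 1 / 2 - aX * I₀X with hbXdef
  set bY := 1 / 2 - aY * I₀Y with hbYdef
  have hbX0 : 0 ≤ bX := by
    have : aX * I₀X ≤ (1/2) * 1 := mul_le_mul haXhalf hI₀X1 hI₀X0 (by norm_num)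
    rw [hbXdef]; linarith
  have hbY0 : 0 ≤ bY := by
    have : aY * I₀Y ≤ (1/2) * 1 := mul_le_mul haYhalf hI₀Y1 hI₀Y0 (by norm_num)
    rw [hbYdef]; linarith
  have habX : aX + bX ≤ 1 := by
    have h1 : aX * I₀X ≥ 0 := mul_nonneg haX0 hI₀X0
    rw [hbXdef]; linarith
  have habY : aY + bY ≤ 1 := by
    have h1 : aY * I₀Y ≥ 0 := mul_nonneg haY0 hI₀Y0
    rw [hbYdef]; linarith
  obtain ⟨δX, hclX, hTX, hFX⟩ := hconX aX bX haX0 hbX0 habX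
  obtain ⟨δY, hclY, hTY, hFY⟩ := hconY aY bY haY0 hbY0 habY
  have haXD : aX * DX = ε := div_mul_cancel₀ ε hDXpos.ne'
  have haYD : aY * DY = ε := div_mul_cancel₀ ε hDYpos.ne'
  have hTX' : TPR δX f₁X = 1 / 2 + ε := by
    have h2 : aX * I₁X + bX = aX * DX + 1 / 2 := by rw [hbXdef, hDXdef]; ring
    rw [hTX, h2, haXD]; ring
  have hTY' : TPR δY f₁Y = 1 / 2 + ε := by
    have h2 : aY * I₁Y + bY = aY * DY + 1 / 2 := by rw [hbYdef, hDYdef]; ring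
    rw [hTY, h2, haYD]; ring
  have hFX' : FPR δX f₀X = 1 / 2 := by rw [hFX, hbXdef]; ring
  have hFY' : FPR δY f₀Y = 1 / 2 := by rw [hFY, hbYdef]; ring
  -- stakes
  set π := max (HX 0) (HY 0) with hπdef
  have hπ1 : π < 1 := max_lt (hHX.2.2.1 0).2 (hHY.2.2.1 0).2
  obtain ⟨rX, hrX⟩ := stake_lemma HX hHX ε hε π (le_max_left _ _) hπ1
  obtain ⟨rY, hrY⟩ := stake_lemma HY hHY ε hε π (le_max_right _ _) hπ1
  refine ⟨δX, δY, rX, rY, 1 / 2 + ε, 1 / 2, hclX, hclY, hTX', hTY', hFX', hFY',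
    by norm_num, by linarith, ?_, ?_, ?_, ?_⟩ <;>
    rw [show (1 / 2 + ε) - 1 / 2 = ε by ring]
  · rw [hrX, hrY]
  · rw [hrX, hrY]
  · rw [hrX]; exact le_max_left _ _
  · rw [hrY]; exact le_max_right _ _
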